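/- Let (Ω, 𝓕, P) be a probability space and (𝔽^i = (𝓕^i_t)_{t≥0})_{i∈ℕ} a sequence of filtrations such that 𝔽^{i-1} is immersed in 𝔽^i for every i ≥ 1. Let 𝔾 be the right-continuous regularization of the filtration (⋁_{i=0}^∞ 𝓕^i_t)_{t≥0}. Then for every k ∈ ℕ, 𝔽^k is immersed in 𝔾; that is, every 𝔽^k-martingale with right-continuous sample paths is a 𝔾-martingale. -/

import Mathlib

open MeasureTheory ProbabilityTheory Filter Set
open scoped ENNReal Topology

noncomputable section

namespace InvMarkovJump

variable {Ω : Type*}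

/-- `F` is a filtration (for times `t ≥ 0`) of sub-σ-algebras of `m0`. -/
def IsFiltration (m0 : MeasurableSpace Ω) (F : ℝ → MeasurableSpace Ω) : Prop :=
  (∀ s t : ℝ, 0 ≤ s → s ≤ t → F s ≤ F t) ∧ ∀ t : ℝ, F t ≤ m0

/-- The right-continuous regularization `(⋂_{s > t} F s)_{t ≥ 0}` of a filtration. -/
def rcReg (F : ℝ → MeasurableSpace Ω) : ℝ → MeasurableSpace Ω :=
  fun t => ⨅ s ∈ Set.Ioi t, F s

/-- All sample paths of `M` are right-continuous (at every time `t ≥ 0`). -/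
def RCPaths (M : ℝ → Ω → ℝ) : Prop :=
  ∀ ω, ∀ t : ℝ, 0 ≤ t → ContinuousWithinAt (fun s => M s ω) (Set.Ici t) t

/-- `M` is a martingale (for times `t ≥ 0`) with respect to the filtration `F`
under the measure `μ`: it is adapted, integrable, and `E[M_t | F_s] = M_s` a.s.
for all `0 ≤ s ≤ t`. -/
def IsMartingale {m0 : MeasurableSpace Ω} (μ : Measure Ω)
    (F : ℝ → MeasurableSpace Ω) (M : ℝ → Ω → ℝ) : Prop :=
  (∀ t : ℝ, 0 ≤ t → Integrable (M t) μ) ∧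
  (∀ t : ℝ, 0 ≤ t → Measurable[F t] (M t)) ∧
  ∀ s t : ℝ, 0 ≤ s → s ≤ t → μ[M t|F s] =ᵐ[μ] M s

/-- `F` is immersed in `G`: `F ⊆ G` and every `F`-martingale (with right-continuous
sample paths) is a `G`-martingale. -/
def Immersed {m0 : MeasurableSpace Ω} (μ : Measure Ω)
    (F G : ℝ → MeasurableSpace Ω) : Prop :=
  (∀ t : ℝ, 0 ≤ t → F t ≤ G t) ∧
  ∀ M : ℝ → Ω → ℝ, RCPaths M → IsMartingale μ F M → IsMartingale μ G M

/-- The usual conditions: the filtration is right-continuous and `F 0` contains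
all `μ`-null sets. -/
def UsualConditions {m0 : MeasurableSpace Ω} (μ : Measure Ω)
    (F : ℝ → MeasurableSpace Ω) : Prop :=
  IsFiltration m0 F ∧ (∀ t : ℝ, 0 ≤ t → F t = rcReg F t) ∧
    ∀ s : Set Ω, μ s = 0 → MeasurableSet[F 0] s

/-- `E` is `Exp(1)`-distributed: `P(E > x) = e^{-x}` for all `x ≥ 0`. -/
def IsExpOne {m0 : MeasurableSpace Ω} (μ : Measure Ω) (E : Ω → ℝ) : Prop :=
  Measurable E ∧ ∀ x : ℝ, 0 ≤ x → μ {ω | x < E ω} = ENNReal.ofReal (Real.exp (-x))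

/-- `F_∞ = ⋁_{t ≥ 0} F t`. -/
def Finfty (F : ℝ → MeasurableSpace Ω) : MeasurableSpace Ω :=
  ⨆ t ∈ Set.Ici (0:ℝ), F t

/-- The natural filtration `(σ(Y_s : 0 ≤ s ≤ t))_{t ≥ 0}` of a process `Y`. -/
def natFilt {β : Type*} [MeasurableSpace β] (Y : ℝ → Ω → β) : ℝ → MeasurableSpace Ω :=
  fun t => ⨆ s ∈ Set.Icc (0:ℝ) t, MeasurableSpace.comap (Y s) inferInstance

/-- Progressive measurability of a process `u` with respect to the filtration `F`:
for every `t ≥ 0`, `(s, ω) ↦ u s ω` on `[0, t] × Ω` is `B([0,t]) ⊗ F t`-measurable. -/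
def ProgMeas (F : ℝ → MeasurableSpace Ω) (u : ℝ → Ω → ℝ) : Prop :=
  ∀ t : ℝ, 0 ≤ t →
    Measurable[MeasurableSpace.prod inferInstance (F t)]
      (fun p : Set.Icc (0:ℝ) t × Ω => u p.1 p.2)

/-- If each `F i` is immersed in `F (i+1)`, then each `F k` is immersed in
the right-continuous regularization of `(⋁_{i ∈ ℕ} F i t)_t`. -/
theorem immersed_iSup {m0 : MeasurableSpace Ω} (μ : Measure Ω) [IsProbabilityMeasure μ]
    (F : ℕ → ℝ → MeasurableSpace Ω)
    (hF : ∀ i, IsFiltration m0 (F i))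
    (himm : ∀ i : ℕ, Immersed μ (F i) (F (i + 1))) :
    ∀ k : ℕ, Immersed μ (F k) (rcReg fun t => ⨆ i, F i t) := by
  intro k
  set H : ℝ → MeasurableSpace Ω := fun t => ⨆ i, F i t with hHdef
  have hFle : ∀ (i : ℕ) (t : ℝ), F i t ≤ m0 := fun i t => (hF i).2 t
  have hHle : ∀ t : ℝ, H t ≤ m0 := fun t => iSup_le fun i => hFle i t
  have hFmonoN : ∀ i j : ℕ, i ≤ j → ∀ t : ℝ, 0 ≤ t → F i t ≤ F j t := by
    intro i j hij
    induction j, hij using Nat.le_induction with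
    | base => exact fun t _ => le_rfl
    | succ j hij ih => exact fun t ht => (ih t ht).trans ((himm j).1 t ht)
  have hHmono : ∀ s t : ℝ, 0 ≤ s → s ≤ t → H s ≤ H t :=
    fun s t hs hst => iSup_mono fun i => (hF i).1 s t hs hst
  set G : ℝ → MeasurableSpace Ω := rcReg H with hGdef
  have hHG : ∀ t : ℝ, 0 ≤ t → H t ≤ G t :=
    fun t ht => le_iInf₂ fun u hu => hHmono t u ht (le_of_lt hu)
  have hGH : ∀ t u : ℝ, t < u → G t ≤ H u := fun t u hu => iInf₂_le u hu
  have hGle : ∀ t : ℝ, G t ≤ m0 :=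
    fun t => (hGH t (t + 1) (by linarith)).trans (hHle (t + 1))
  have hFkG : ∀ t : ℝ, 0 ≤ t → F k t ≤ G t :=
    fun t ht => (le_iSup (fun i => F i t) k).trans (hHG t ht)
  refine ⟨hFkG, ?_⟩
  intro M hRC hM
  -- `M` is an `F m`-martingale for every `m ≥ k`
  have hMm : ∀ m : ℕ, k ≤ m → IsMartingale μ (F m) M := by
    intro m hm
    induction m, hm using Nat.le_induction with
    | base => exact hM
    | succ m _ ih => exact (himm m).2 M hRC ih
  have hint : ∀ t : ℝ, 0 ≤ t → Integrable (M t) μ := hM.1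
  -- integral equality over every `H s`-measurable set
  have hset : ∀ s t : ℝ, 0 ≤ s → s ≤ t → ∀ A : Set Ω, MeasurableSet[H s] A →
      ∫ x in A, M t x ∂μ = ∫ x in A, M s x ∂μ := by
    intro s t hs hst
    have ht : (0:ℝ) ≤ t := hs.trans hst
    have hgen : H s = MeasurableSpace.generateFrom (⋃ i, {A | MeasurableSet[F i s] A}) :=
      (MeasurableSpace.generateFrom_iUnion_measurableSet _).symm
    have hpi : IsPiSystem (⋃ i, {A : Set Ω | MeasurableSet[F i s] A}) := by
      rintro A hA B hB -
      simp only [Set.mem_iUnion, Set.mem_setOf_eq] at hA hB ⊢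
      obtain ⟨i, hA⟩ := hA
      obtain ⟨j, hB⟩ := hB
      exact ⟨max i j, MeasurableSet.inter
        (hFmonoN i (max i j) (le_max_left _ _) s hs A hA)
        (hFmonoN j (max i j) (le_max_right _ _) s hs B hB)⟩
    have hTot : ∫ x, M t x ∂μ = ∫ x, M s x ∂μ := by
      have h1 := integral_condExp (μ := μ) (f := M t) (hFle k s)
      have h2 := integral_congr_ae (hM.2.2 s t hs hst)
      rw [← h1]; exact h2
    intro A hA
    refine MeasurableSpace.induction_on_inter (m := H s)
      (C := fun A _ => ∫ x in A, M t x ∂μ = ∫ x in A, M s x ∂μ) hgen hpi ?_ ?_ ?_ ?_ A hA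
    · simp
    · rintro B hB
      simp only [Set.mem_iUnion, Set.mem_setOf_eq] at hB
      obtain ⟨i, hB⟩ := hB
      have hBm : MeasurableSet[F (max i k) s] B := hFmonoN i _ (le_max_left _ _) s hs B hB
      have hM' := hMm (max i k) (le_max_right _ _)
      calc ∫ x in B, M t x ∂μ = ∫ x in B, (μ[M t|F (max i k) s]) x ∂μ :=
            (setIntegral_condExp (hFle _ s) (hint t ht) hBm).symm
        _ = ∫ x in B, M s x ∂μ := by
            refine setIntegral_congr_ae (hFle _ s B hBm) ?_
            filter_upwards [hM'.2.2 s t hs hst] with x hx _ using hx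
    · intro B hBm hB
      have hB0 : MeasurableSet B := hHle s B hBm
      have h1 := integral_add_compl hB0 (hint t ht)
      have h2 := integral_add_compl hB0 (hint s hs)
      linarith [hTot]
    · intro f hdisj hfm hC
      have hfm0 : ∀ i, MeasurableSet (f i) := fun i => hHle s _ (hfm i)
      rw [integral_iUnion hfm0 hdisj (hint t ht).integrableOn,
        integral_iUnion hfm0 hdisj (hint s hs).integrableOn]
      exact tsum_congr hC
  -- `M` is an `H`-martingale (conditional expectation form)
  have hHmart : ∀ s t : ℝ, 0 ≤ s → s ≤ t → μ[M t|H s] =ᵐ[μ] M s := by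
    intro s t hs hst
    refine (ae_eq_condExp_of_forall_setIntegral_eq (hHle s) (hint t (hs.trans hst))
      (fun A _ _ => (hint s hs).integrableOn)
      (fun A hA _ => (hset s t hs hst A hA).symm) ?_).symm
    exact StronglyMeasurable.aestronglyMeasurable
      (((hM.2.1 s hs).mono (le_iSup (fun i => F i s) k) le_rfl).stronglyMeasurable)
  -- conditional expectation property for `G`
  have hGmart : ∀ s t : ℝ, 0 ≤ s → s ≤ t → μ[M t|G s] =ᵐ[μ] M s := by
    intro s t hs hst
    have hMsSM : StronglyMeasurable[G s] (M s) :=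
      ((hM.2.1 s hs).mono (hFkG s hs) le_rfl).stronglyMeasurable
    rcases eq_or_lt_of_le hst with rfl | hlt
    · simp [condExp_of_stronglyMeasurable (hGle s) hMsSM (hint s hs)]
    · set u : ℕ → ℝ := fun n => s + (t - s) / (n + 1) with hu
      have hupos : ∀ n : ℕ, s < u n := by
        intro n
        have hn : (0:ℝ) < (n:ℝ) + 1 := by positivity
        have h0 : (0:ℝ) < (t - s) / ((n:ℝ) + 1) := div_pos (by linarith) hn
        simp only [hu]
        linarith
      have hule : ∀ n : ℕ, u n ≤ t := by
        intro n
        have hn : (1:ℝ) ≤ (n:ℝ) + 1 := by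
          have : (0:ℝ) ≤ (n:ℝ) := Nat.cast_nonneg n
          linarith
        have hd : (t - s) / ((n:ℝ) + 1) ≤ t - s := div_le_self (by linarith) hn
        simp only [hu]
        linarith
      have hu0 : ∀ n : ℕ, (0:ℝ) ≤ u n := fun n => hs.trans (hupos n).le
      have hutend : Tendsto u atTop (𝓝 s) := by
        have h1 : Tendsto (fun n : ℕ => (t - s) / ((n:ℝ) + 1)) atTop (𝓝 0) := by
          simpa [div_eq_mul_inv] using
            tendsto_one_div_add_atTop_nhds_zero_nat.const_mul (t - s)
        have h2 := tendsto_const_nhds (x := s) (f := atTop (α := ℕ)) |>.add h1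
        simpa using h2
      set f : ℕ → Ω → ℝ := fun n => μ[M t|H (u n)] with hf
      have hfeq : ∀ n, f n =ᵐ[μ] M (u n) := fun n => hHmart (u n) t (hu0 n) (hule n)
      have hui : UniformIntegrable f 1 μ :=
        (hint t (hs.trans hst)).uniformIntegrable_condExp fun n => hHle (u n)
      have hae : ∀ᵐ x ∂μ, Tendsto (fun n => f n x) atTop (𝓝 (M s x)) := by
        have hall : ∀ᵐ x ∂μ, ∀ n, f n x = M (u n) x := ae_all_iff.2 fun n => hfeq n
        filter_upwards [hall] with x hx
        have htend : Tendsto (fun n => M (u n) x) atTop (𝓝 (M s x)) := by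
          refine (hRC x s hs).tendsto.comp ?_
          exact tendsto_nhdsWithin_iff.2
            ⟨hutend, Filter.Eventually.of_forall fun n => (hupos n).le⟩
        exact htend.congr fun n => (hx n).symm
      have hLp : Tendsto (fun n => eLpNorm (f n - M s) 1 μ) atTop (𝓝 0) :=
        tendsto_Lp_finite_of_tendsto_ae le_rfl ENNReal.one_ne_top hui.1
          (memLp_one_iff_integrable.2 (hint s hs)) hui.2.1 hae
      have hkey : ∀ n : ℕ, eLpNorm (μ[M t|G s] - M s) 1 μ ≤ eLpNorm (f n - M s) 1 μ := by
        intro n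
        have h1 : μ[f n - M s|G s] =ᵐ[μ] μ[M t|G s] - M s := by
          calc μ[f n - M s|G s] =ᵐ[μ] μ[f n|G s] - μ[M s|G s] :=
                condExp_sub integrable_condExp (hint s hs) _
            _ =ᵐ[μ] μ[M t|G s] - M s := by
                refine EventuallyEq.sub ?_ ?_
                · exact condExp_condExp_of_le (hGH s (u n) (hupos n)) (hHle (u n))
                · rw [condExp_of_stronglyMeasurable (hGle s) hMsSM (hint s hs)]
        calc eLpNorm (μ[M t|G s] - M s) 1 μ = eLpNorm (μ[f n - M s|G s]) 1 μ :=
              (eLpNorm_congr_ae h1).symm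
          _ ≤ eLpNorm (f n - M s) 1 μ := eLpNorm_one_condExp_le_eLpNorm _
      have hzero : eLpNorm (μ[M t|G s] - M s) 1 μ = 0 :=
        le_antisymm (ge_of_tendsto' hLp hkey) zero_le
      have hae0 : (μ[M t|G s] - M s) =ᵐ[μ] 0 :=
        (eLpNorm_eq_zero_iff
          (((stronglyMeasurable_condExp.mono (hGle s)).aestronglyMeasurable).sub
            (hint s hs).1) one_ne_zero).1 hzero
      filter_upwards [hae0] with x hx
      have hx' : (μ[M t|G s]) x - M s x = 0 := hx
      linarith
  refine ⟨hM.1, ?_, hGmart⟩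
  intro t ht
  exact (hM.2.1 t ht).mono (hFkG t ht) le_rfl

end InvMarkovJump
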